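/- Fix t > 0, and for ε ∈ (0, 1/2) define u, u_ε : ℝ → ℝ by u(x) = 1/2 if x > t/2 and 0 otherwise, and u_ε(x) = 1/2 + ε if x > (1/2 − ε)t and 0 otherwise. Then for every continuous compactly supported function ψ : ℝ → ℝ, lim_{ε → 0⁺} ∫_ℝ ( (u_ε(x) − u(x))/ε ) ψ(x) dx = ∫_{t/2}^{+∞} ψ(x) dx + (t/2)·ψ(t/2). In particular, the difference quotients (u_ε − u)/ε converge weakly-* in the sense of measures to the sum of the Heaviside function H(· − t/2) (as a density) and a point mass of weight t/2 at x = t/2, and not to any locally integrable function. -/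

import Mathlib

open MeasureTheory Filter

/-- For fixed `t > 0`, let `u = (1/2)·χ_{x > t/2}` and
`u_ε = (1/2 + ε)·χ_{x > (1/2 - ε)t}` (the profiles at time `t` of the entropy
solutions with initial data `(1/2)χ_{[0,∞)}` and `(1/2+ε)χ_{[0,∞)}`). Then for
every continuous compactly supported `ψ`,
`∫ ((u_ε - u)/ε) ψ → ∫_{t/2}^∞ ψ + (t/2) ψ(t/2)` as `ε → 0⁺`, i.e. the
difference quotients converge weakly-* to `H(· - t/2) + (t/2) δ_{t/2}`. -/
theorem stmt17 (t : ℝ) (ht : 0 < t)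
    (ψ : ℝ → ℝ) (hψ : Continuous ψ) (hψc : HasCompactSupport ψ) :
    Tendsto (fun ε : ℝ =>
        ∫ x : ℝ,
          (((if x > (1 / 2 - ε) * t then 1 / 2 + ε else 0)
              - (if x > t / 2 then (1 : ℝ) / 2 else 0)) / ε) * ψ x)
      (nhdsWithin 0 (Set.Ioo (0 : ℝ) (1 / 2)))
      (nhds ((∫ x in Set.Ioi (t / 2), ψ x) + (t / 2) * ψ (t / 2))) := by
  have hint : Integrable ψ := hψ.integrable_of_hasCompactSupport hψc
  set G : ℝ → ℝ := fun y => ∫ x in (t/2)..y, ψ x with hGdef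
  have hG : HasDerivAt G (ψ (t/2)) (t/2) :=
    (intervalIntegral.integral_hasStrictDerivAt_right
      hint.intervalIntegrable
      (hint.aestronglyMeasurable.stronglyMeasurableAtFilter)
      hψ.continuousAt).hasDerivAt
  have haff : HasDerivAt (fun ε : ℝ => t/2 - ε*t) (-t) 0 := by
    simpa using ((hasDerivAt_id (0:ℝ)).mul_const t).const_sub (t/2)
  have hcomp : HasDerivAt (fun ε : ℝ => G (t/2 - ε*t)) (-(t * ψ (t/2))) 0 := by
    have hG' : HasDerivAt G (ψ (t/2)) (t/2 - 0*t) := by simpa using hG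
    have := hG'.comp 0 haff
    simpa [mul_comm, Function.comp_def] using this
  have hG0 : G (t/2) = 0 := intervalIntegral.integral_same
  have hslope : Tendsto (slope (fun ε : ℝ => G (t/2 - ε*t)) 0)
      (nhdsWithin 0 (Set.Ioo (0:ℝ) (1/2))) (nhds (-(t * ψ (t/2)))) :=
    (hasDerivAt_iff_tendsto_slope.mp hcomp).mono_left
      (nhdsWithin_mono _ (by intro x hx; exact ne_of_gt hx.1))
  -- limit of the auxiliary expression
  have hmul : Tendsto (fun ε : ℝ =>
      (∫ x in Set.Ioi (t/2), ψ x) + (1/2 + ε) * (-(slope (fun ε : ℝ => G (t/2 - ε*t)) 0 ε)))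
      (nhdsWithin 0 (Set.Ioo (0:ℝ) (1/2)))
      (nhds ((∫ x in Set.Ioi (t/2), ψ x) + (t/2) * ψ (t/2))) := by
    have h1 : Tendsto (fun ε : ℝ => (1:ℝ)/2 + ε)
        (nhdsWithin 0 (Set.Ioo (0:ℝ) (1/2))) (nhds ((1:ℝ)/2)) := by
      have h0 : Tendsto (fun ε : ℝ => (1:ℝ)/2 + ε) (nhds 0) (nhds ((1:ℝ)/2 + 0)) :=
        (continuous_const.add continuous_id).tendsto 0
      simpa using h0.mono_left nhdsWithin_le_nhds
    have h2 := h1.mul hslope.neg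
    have h3 := tendsto_const_nhds (α := ℝ)
      (x := ∫ x in Set.Ioi (t/2), ψ x)
      (f := nhdsWithin 0 (Set.Ioo (0:ℝ) (1/2)))
    have := h3.add h2
    convert this using 2
    ring
  refine hmul.congr' ?_
  filter_upwards [self_mem_nhdsWithin] with ε hε
  obtain ⟨hε0, hε2⟩ := hε
  have hεne : (ε:ℝ) ≠ 0 := ne_of_gt hε0
  have hlt : t/2 - ε*t < t/2 := by nlinarith
  have hrw : (1/2 - ε) * t = t/2 - ε*t := by ring
  -- pointwise identity
  have key : ∀ x : ℝ,
      (((if x > (1 / 2 - ε) * t then 1 / 2 + ε else 0)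
          - (if x > t / 2 then (1 : ℝ) / 2 else 0)) / ε) * ψ x
      = (Set.Ioi (t/2)).indicator ψ x
        + ((1/2 + ε)/ε) * (Set.Ioc (t/2 - ε*t) (t/2)).indicator ψ x := by
    intro x
    rw [hrw]
    by_cases h1 : x > t/2
    · have h2 : x > t/2 - ε*t := lt_trans hlt h1
      simp only [if_pos h1, if_pos h2, Set.indicator_of_mem (Set.mem_Ioi.mpr h1),
        Set.indicator_of_notMem (by simp [Set.mem_Ioc]; intro _; linarith : x ∉ Set.Ioc (t/2 - ε*t) (t/2))]
      field_simp
      ring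
    · by_cases h2 : x > t/2 - ε*t
      · have hmem : x ∈ Set.Ioc (t/2 - ε*t) (t/2) := ⟨h2, le_of_not_gt h1⟩
        simp only [if_pos h2, if_neg h1, Set.indicator_of_notMem (by simpa using h1 : x ∉ Set.Ioi (t/2)),
          Set.indicator_of_mem hmem]
        ring
      · simp [if_neg h1, if_neg h2, Set.indicator_of_notMem (by simpa using h1 : x ∉ Set.Ioi (t/2)),
          Set.indicator_of_notMem (by simp [Set.mem_Ioc]; intro h; exact absurd h h2 : x ∉ Set.Ioc (t/2 - ε*t) (t/2))]
  -- integrate the identity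
  have hi1 : Integrable ((Set.Ioi (t/2)).indicator ψ) :=
    hint.indicator measurableSet_Ioi
  have hi2 : Integrable (fun x => ((1/2 + ε)/ε) * (Set.Ioc (t/2 - ε*t) (t/2)).indicator ψ x) :=
    (hint.indicator measurableSet_Ioc).const_mul _
  calc (∫ x in Set.Ioi (t/2), ψ x)
        + (1/2 + ε) * (-(slope (fun ε : ℝ => G (t/2 - ε*t)) 0 ε))
      = (∫ x in Set.Ioi (t/2), ψ x)
        + ((1/2 + ε)/ε) * ∫ x in Set.Ioc (t/2 - ε*t) (t/2), ψ x := by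
        have : (∫ x in Set.Ioc (t/2 - ε*t) (t/2), ψ x) = -(G (t/2 - ε*t)) := by
          rw [hGdef]
          rw [← intervalIntegral.integral_of_le (le_of_lt hlt),
            ← intervalIntegral.integral_symm]
        have hs : slope (fun ε : ℝ => G (t/2 - ε*t)) 0 ε = G (t/2 - ε*t)/ε := by
          rw [slope_def_field]
          simp [hG0]
        rw [this, hs]
        field_simp
    _ = ∫ x : ℝ, ((Set.Ioi (t/2)).indicator ψ x
          + ((1/2 + ε)/ε) * (Set.Ioc (t/2 - ε*t) (t/2)).indicator ψ x) := by
        rw [integral_add hi1 hi2, integral_const_mul,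
          integral_indicator measurableSet_Ioi, integral_indicator measurableSet_Ioc]
    _ = _ := by
        exact (integral_congr_ae (Filter.Eventually.of_forall fun x => (key x).symm))
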